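/- Suppose x₁,…,x_n ∈ S^{d-1} lie in k spherical caps S_q(ε) = {x : ⟨x, w_q⟩ ≥ 1-ε} with pairwise cap separation α = max over distinct caps of ⟨x,y⟩ for x,y in different caps, and each cap nonempty. Then E_β(x₁,…,x_n) ≥ 1/(2βn) and moreover, if n_q particles lie in cap q, then (2βe^β n²) E_β ≥ Σ_q n_q² e^{(1-8ε)β} with the cross-cap terms bounded above by (n² - Σ_q n_q²) e^{αβ}; hence E_β ≥ (Σ_q n_q²/(2βn²)) e^{-8εβ}. -/

import Mathlib

open RealInnerProductSpace

set_option maxHeartbeats 800000 in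
theorem stmt17 {d n k : ℕ} (hn : 0 < n) (hk : 0 < k) (β ε α : ℝ) (hβ : 0 < β)
    (hε : 0 < ε) (hε' : ε < 1/4)
    (x : Fin n → EuclideanSpace ℝ (Fin d)) (hx : ∀ i, ‖x i‖ = 1)
    (w : Fin k → EuclideanSpace ℝ (Fin d)) (hw : ∀ q, ‖w q‖ = 1)
    (σ : Fin n → Fin k)
    (hcap : ∀ i, 1 - 2 * ε ≤ ⟪x i, w (σ i)⟫)
    (hα : ∀ i j, σ i ≠ σ j → ⟪x i, x j⟫ ≤ α) :
    (1 / (2 * β * n) ≤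
      (1 / (2 * β * Real.exp β * (n : ℝ) ^ 2)) * ∑ i, ∑ j, Real.exp (β * ⟪x i, x j⟫)) ∧
    (∑ q, ((Finset.univ.filter fun i => σ i = q).card : ℝ) ^ 2 *
        Real.exp ((1 - 8 * ε) * β) ≤ ∑ i, ∑ j, Real.exp (β * ⟪x i, x j⟫)) ∧
    (∑ p ∈ Finset.univ.filter (fun p : Fin n × Fin n => σ p.1 ≠ σ p.2),
        Real.exp (β * ⟪x p.1, x p.2⟫) ≤
      ((n : ℝ) ^ 2 - ∑ q, ((Finset.univ.filter fun i => σ i = q).card : ℝ) ^ 2) *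
        Real.exp (α * β)) ∧
    ((∑ q, ((Finset.univ.filter fun i => σ i = q).card : ℝ) ^ 2) / (2 * β * (n : ℝ) ^ 2) *
        Real.exp (-8 * ε * β) ≤
      (1 / (2 * β * Real.exp β * (n : ℝ) ^ 2)) * ∑ i, ∑ j, Real.exp (β * ⟪x i, x j⟫)) := by
  -- same-cap inner product bound
  have hsame : ∀ i j, σ i = σ j → 1 - 8 * ε ≤ ⟪x i, x j⟫ := by
    intro i j hij
    have h1 : ‖x i - w (σ i)‖ ^ 2 = 2 - 2 * ⟪x i, w (σ i)⟫ := by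
      rw [norm_sub_sq_real, hx, hw]; ring
    have h2 : ‖x j - w (σ i)‖ ^ 2 = 2 - 2 * ⟪x j, w (σ i)⟫ := by
      rw [norm_sub_sq_real, hx, hw]; ring
    have h3 : ‖x i - x j‖ ^ 2 = 2 - 2 * ⟪x i, x j⟫ := by
      rw [norm_sub_sq_real, hx, hx]; ring
    have htri : ‖x i - x j‖ ≤ ‖x i - w (σ i)‖ + ‖x j - w (σ i)‖ := by
      have : x i - x j = (x i - w (σ i)) - (x j - w (σ i)) := by abel
      rw [this]; exact norm_sub_le _ _
    have hci := hcap i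
    have hcj := hcap j
    rw [← hij] at hcj
    nlinarith [norm_nonneg (x i - x j), norm_nonneg (x i - w (σ i)),
      norm_nonneg (x j - w (σ i)), sq_nonneg (‖x i - w (σ i)‖ - ‖x j - w (σ i)‖)]
  have hpair : ∑ i, ∑ j, Real.exp (β * ⟪x i, x j⟫)
      = ∑ p ∈ (Finset.univ : Finset (Fin n × Fin n)), Real.exp (β * ⟪x p.1, x p.2⟫) := by
    rw [← Finset.univ_product_univ, Finset.sum_product]
  -- counting
  have hcard : (Finset.univ.filter fun p : Fin n × Fin n => σ p.1 = σ p.2).card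
      = ∑ q, (Finset.univ.filter fun i => σ i = q).card ^ 2 := by
    rw [Finset.card_eq_sum_card_fiberwise
      (f := fun p : Fin n × Fin n => σ p.1) (t := Finset.univ) (fun p _ => Finset.mem_univ _)]
    refine Finset.sum_congr rfl fun q _ => ?_
    have hset : (Finset.univ.filter (fun p : Fin n × Fin n => σ p.1 = σ p.2)).filter
        (fun p => σ p.1 = q)
        = (Finset.univ.filter fun i => σ i = q) ×ˢ (Finset.univ.filter fun i => σ i = q) := by
      ext p
      simp only [Finset.mem_filter, Finset.mem_product, Finset.mem_univ, true_and]
      constructor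
      · rintro ⟨h1, h2⟩; exact ⟨h2, h1.symm.trans h2⟩
      · rintro ⟨h1, h2⟩; exact ⟨h1.trans h2.symm, h1⟩
    rw [hset, Finset.card_product, sq]
  have hcardsum : (Finset.univ.filter fun p : Fin n × Fin n => σ p.1 = σ p.2).card
      + (Finset.univ.filter fun p : Fin n × Fin n => σ p.1 ≠ σ p.2).card = n * n := by
    rw [Finset.card_filter_add_card_filter_not, Finset.card_univ]
    simp [Fintype.card_prod]
  -- diagonal bound
  have hdiag : (n : ℝ) * Real.exp β ≤ ∑ i, ∑ j, Real.exp (β * ⟪x i, x j⟫) := by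
    have h1 : ∀ i : Fin n, Real.exp β ≤ ∑ j, Real.exp (β * ⟪x i, x j⟫) := by
      intro i
      have : Real.exp (β * ⟪x i, x i⟫) = Real.exp β := by
        rw [real_inner_self_eq_norm_sq, hx]; norm_num
      calc Real.exp β = Real.exp (β * ⟪x i, x i⟫) := this.symm
        _ ≤ ∑ j, Real.exp (β * ⟪x i, x j⟫) :=
          Finset.single_le_sum (f := fun j => Real.exp (β * ⟪x i, x j⟫))
            (fun j _ => (Real.exp_pos _).le) (Finset.mem_univ i)
    calc (n : ℝ) * Real.exp β = ∑ _i : Fin n, Real.exp β := by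
          rw [Finset.sum_const, Finset.card_univ, Fintype.card_fin, nsmul_eq_mul]
      _ ≤ _ := Finset.sum_le_sum fun i _ => h1 i
  -- part 2
  have part2 : ∑ q, ((Finset.univ.filter fun i => σ i = q).card : ℝ) ^ 2 *
      Real.exp ((1 - 8 * ε) * β) ≤ ∑ i, ∑ j, Real.exp (β * ⟪x i, x j⟫) := by
    rw [hpair, ← Finset.sum_mul]
    have hc : (∑ q, ((Finset.univ.filter fun i => σ i = q).card : ℝ) ^ 2)
        = ((Finset.univ.filter fun p : Fin n × Fin n => σ p.1 = σ p.2).card : ℝ) := by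
      rw [hcard]; push_cast; ring
    rw [hc]
    calc ((Finset.univ.filter fun p : Fin n × Fin n => σ p.1 = σ p.2).card : ℝ)
          * Real.exp ((1 - 8 * ε) * β)
        ≤ ∑ p ∈ Finset.univ.filter (fun p : Fin n × Fin n => σ p.1 = σ p.2),
            Real.exp (β * ⟪x p.1, x p.2⟫) := by
          rw [← nsmul_eq_mul]
          refine Finset.card_nsmul_le_sum _ _ _ fun p hp => ?_
          have := hsame p.1 p.2 (Finset.mem_filter.mp hp).2
          exact Real.exp_le_exp.mpr (by nlinarith)
      _ ≤ ∑ p ∈ (Finset.univ : Finset (Fin n × Fin n)), Real.exp (β * ⟪x p.1, x p.2⟫) :=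
          Finset.sum_le_sum_of_subset_of_nonneg (Finset.filter_subset _ _)
            (fun p _ _ => (Real.exp_pos _).le)
  -- part 3
  have part3 : ∑ p ∈ Finset.univ.filter (fun p : Fin n × Fin n => σ p.1 ≠ σ p.2),
      Real.exp (β * ⟪x p.1, x p.2⟫) ≤
      ((n : ℝ) ^ 2 - ∑ q, ((Finset.univ.filter fun i => σ i = q).card : ℝ) ^ 2) *
        Real.exp (α * β) := by
    have hcastcard : ((Finset.univ.filter fun p : Fin n × Fin n => σ p.1 ≠ σ p.2).card : ℝ)
        = (n : ℝ) ^ 2 - ∑ q, ((Finset.univ.filter fun i => σ i = q).card : ℝ) ^ 2 := by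
      have := hcardsum
      rw [hcard] at this
      have := congrArg (fun m : ℕ => (m : ℝ)) this
      push_cast at this
      linarith
    rw [← hcastcard, ← nsmul_eq_mul]
    refine Finset.sum_le_card_nsmul _ _ _ fun p hp => ?_
    have := hα p.1 p.2 (Finset.mem_filter.mp hp).2
    exact Real.exp_le_exp.mpr (by nlinarith)
  have hnR : (0 : ℝ) < n := by exact_mod_cast hn
  have hpos : (0 : ℝ) < 2 * β * Real.exp β * (n : ℝ) ^ 2 := by positivity
  -- part 1
  have part1 : 1 / (2 * β * n) ≤
      (1 / (2 * β * Real.exp β * (n : ℝ) ^ 2)) * ∑ i, ∑ j, Real.exp (β * ⟪x i, x j⟫) := by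
    have heq : 1 / (2 * β * (n : ℝ)) =
        (1 / (2 * β * Real.exp β * (n : ℝ) ^ 2)) * ((n : ℝ) * Real.exp β) := by
      field_simp
    rw [heq]
    exact mul_le_mul_of_nonneg_left hdiag (by positivity)
  -- part 4
  have part4 : (∑ q, ((Finset.univ.filter fun i => σ i = q).card : ℝ) ^ 2) /
      (2 * β * (n : ℝ) ^ 2) * Real.exp (-8 * ε * β) ≤
      (1 / (2 * β * Real.exp β * (n : ℝ) ^ 2)) * ∑ i, ∑ j, Real.exp (β * ⟪x i, x j⟫) := by
    have hex : Real.exp ((1 - 8 * ε) * β) = Real.exp β * Real.exp (-8 * ε * β) := by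
      rw [← Real.exp_add]; ring_nf
    have heq : (∑ q, ((Finset.univ.filter fun i => σ i = q).card : ℝ) ^ 2) /
        (2 * β * (n : ℝ) ^ 2) * Real.exp (-8 * ε * β) =
        (1 / (2 * β * Real.exp β * (n : ℝ) ^ 2)) *
          (∑ q, ((Finset.univ.filter fun i => σ i = q).card : ℝ) ^ 2 *
            Real.exp ((1 - 8 * ε) * β)) := by
      rw [← Finset.sum_mul, hex]
      have hne : Real.exp β ≠ 0 := (Real.exp_pos β).ne'
      generalize (∑ q, ((Finset.univ.filter fun i => σ i = q).card : ℝ) ^ 2) = S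
      field_simp
    rw [heq]
    exact mul_le_mul_of_nonneg_left part2 (by positivity)
  exact ⟨part1, part2, part3, part4⟩
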